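/- arXiv:2604.00511 — 4 statements merged into one kernel-verified Lean document; each statement's English description precedes it below -/
import Mathlib

section
/- Let R be a commutative ring and n a positive integer that is invertible in R (i.e. the image of n in R is a unit). If u ∈ R satisfies u^n = 1 and u - 1 is nilpotent, then u = 1. -/
/-- Let `R` be a commutative ring and `n` a positive integer that is invertible in `R`.
If `u ∈ R` satisfies `u ^ n = 1` and `u - 1` is nilpotent, then `u = 1`. -/
theorem root_of_unity_eq_one_of_nilpotent_sub_one
    {R : Type*} [CommRing R] (n : ℕ) (hn : 0 < n) (hunit : IsUnit (n : R))
    (u : R) (hu : u ^ n = 1) (hnil : IsNilpotent (u - 1)) : u = 1 := by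
  set S : R := ∑ i ∈ Finset.range n, u ^ i with hS
  have hgeom : S * (u - 1) = 0 := by
    rw [hS, geom_sum_mul, hu, sub_self]
  have hdvd : (u - 1) ∣ S - n := by
    have : S - (n : R) = ∑ i ∈ Finset.range n, (u ^ i - 1) := by
      rw [Finset.sum_sub_distrib, Finset.sum_const, Finset.card_range, nsmul_eq_mul,
        mul_one]
    rw [this]
    apply Finset.dvd_sum
    intro i _
    simpa using sub_dvd_pow_sub_pow u 1 i
  obtain ⟨c, hc⟩ := hdvd
  have hnilc : IsNilpotent ((u - 1) * c) := (Commute.all (u-1) c).isNilpotent_mul_right hnil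
  have hSunit : IsUnit S := by
    have : S = (n : R) + (u - 1) * c := by rw [← hc]; ring
    rw [this]
    exact hnilc.isUnit_add_left_of_commute hunit (Commute.all _ _)
  have := hSunit.mul_right_eq_zero.mp hgeom
  exact sub_eq_zero.mp this
end

section
/- Let A be a commutative Artinian local ring, let I be an ideal of A contained in the maximal ideal of A, and let n be a positive integer that is invertible in A. Then the quotient map A → A/I induces an isomorphism of groups μ_n(A) → μ_n(A/I), where μ_n(R) denotes the group of n-th roots of unity of a commutative ring R. -/
lemma aux_sq_zero_pow {R : Type*} [CommRing R] (x y : R) (h : y * y = 0) :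
    ∀ m : ℕ, (x + y) ^ (m + 1) = x ^ (m + 1) + (m + 1) * x ^ m * y := by
  intro m
  induction m with
  | zero => ring
  | succ m ih =>
    have : (x + y) ^ (m + 2) = (x + y) ^ (m + 1) * (x + y) := by ring
    rw [this, ih]
    push_cast
    linear_combination ((m + 1 : R) * x ^ m) * h

lemma aux_binom {R : Type*} [CommRing R] (x : R) :
    ∀ m : ℕ, ∃ r : R, (1 + x) ^ m = 1 + m * x + x ^ 2 * r := by
  intro m
  induction m with
  | zero => exact ⟨0, by ring⟩
  | succ m ih =>
    obtain ⟨r, hr⟩ := ih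
    refine ⟨m + r + r * x, ?_⟩
    have : (1 + x) ^ (m + 1) = (1 + x) ^ m * (1 + x) := by ring
    rw [this, hr]
    push_cast
    ring

-- unipotent n-th root of unity is 1
lemma aux_unipotent {A : Type*} [CommRing A] (n : ℕ) (hunit : IsUnit (n : A))
    (x : A) (hx : IsNilpotent x) (h : (1 + x) ^ n = 1) : x = 0 := by
  obtain ⟨r, hr⟩ := aux_binom x n
  rw [hr] at h
  -- n * x = - x^2 * r
  have hnx : (n : A) * x = -(x ^ 2 * r) := by linear_combination h
  obtain ⟨u, hu⟩ := hunit
  have hx2 : x = x * (x * (-(↑u⁻¹ * r))) := by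
    have := congrArg (fun t => (↑u⁻¹ : A) * t) hnx
    have huu : (↑u⁻¹ : A) * (n : A) = 1 := by rw [← hu]; exact u.inv_mul
    calc x = (↑u⁻¹ : A) * (n : A) * x := by rw [huu, one_mul]
    _ = (↑u⁻¹ : A) * ((n : A) * x) := by ring
    _ = (↑u⁻¹ : A) * -(x ^ 2 * r) := by rw [hnx]
    _ = x * (x * (-(↑u⁻¹ * r))) := by ring
  have hnil : IsNilpotent (x * (-(↑u⁻¹ * r))) :=
    (Commute.all x _).isNilpotent_mul_right hx
  have hU : IsUnit (1 - x * (-(↑u⁻¹ * r))) := by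
    simpa using (IsNilpotent.isUnit_one_sub hnil)
  have hz : x * (1 - x * (-(↑u⁻¹ * r))) = 0 := by
    linear_combination hx2
  exact hU.mul_left_eq_zero.mp hz

-- Newton lifting along a nilpotent ideal in the maximal ideal
lemma aux_lift {A : Type*} [CommRing A] [IsLocalRing A]
    (n : ℕ) (hn : 0 < n) (hunit : IsUnit (n : A)) :
    ∀ m : ℕ, ∀ I : Ideal A, I ≤ IsLocalRing.maximalIdeal A → I ^ (2 ^ m) = ⊥ →
      ∀ a : A, a ^ n - 1 ∈ I → ∃ b : A, b ^ n = 1 ∧ b - a ∈ I := by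
  intro m
  induction m with
  | zero =>
    intro I hIm hI0 a ha
    rw [pow_zero, pow_one] at hI0
    rw [hI0] at ha
    exact ⟨a, by simpa [sub_eq_zero] using (Ideal.mem_bot.mp ha), by rw [hI0]; simp⟩
  | succ m ih =>
    intro I hIm hI0 a ha
    -- a is a unit
    set e := a ^ n - 1 with he
    have hane : a ^ n = 1 + e := by ring
    have haU : IsUnit (a ^ n) := by
      rw [hane]
      by_contra hcon
      have h1 : 1 + e ∈ IsLocalRing.maximalIdeal A :=
        (IsLocalRing.mem_maximalIdeal _).mpr hcon
      have h2 : (1 : A) ∈ IsLocalRing.maximalIdeal A := by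
        have := Ideal.sub_mem _ h1 (hIm ha)
        simp at this
      exact (Ideal.ne_top_iff_one _).mp
        (IsLocalRing.maximalIdeal.isMaximal A).ne_top h2
    have haU' : IsUnit a := (isUnit_pow_iff hn.ne').mp haU
    have huD : IsUnit ((n : A) * a ^ (n - 1)) := hunit.mul (haU'.pow _)
    obtain ⟨u, hu⟩ := huD
    set d := (↑u⁻¹ : A) * e with hd
    have hdI : d ∈ I := Ideal.mul_mem_left _ _ ha
    -- c := a - d satisfies c ^ n - 1 ∈ I ^ 2
    set c := a - d with hc
    have hkey : c ^ n - 1 ∈ I ^ 2 := by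
      rw [← Ideal.Quotient.eq_zero_iff_mem]
      set π := Ideal.Quotient.mk (I ^ 2) with hπ
      have hysq : (-(π d)) * (-(π d)) = 0 := by
        have : π (d * d) = 0 := Ideal.Quotient.eq_zero_iff_mem.mpr
          (by rw [pow_two]; exact Ideal.mul_mem_mul hdI hdI)
        rw [neg_mul_neg, ← map_mul]
        exact this
      obtain ⟨m', hm'⟩ : ∃ m', n = m' + 1 := ⟨n - 1, (Nat.succ_pred_eq_of_pos hn).symm⟩
      have hπc : π c = π a + (-(π d)) := by rw [hc]; simp [sub_eq_add_neg]
      have hpow := aux_sq_zero_pow (π a) (-(π d)) hysq m'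
      have hda : (n : A) * a ^ (n - 1) * d = e := by
        rw [hd, ← hu, ← mul_assoc, u.mul_inv, one_mul]
      have : π (c ^ n) = π 1 := by
        rw [map_pow, hπc, hm', hpow]
        have h1 : (π a) ^ (m' + 1) = π (a ^ n) := by rw [map_pow, hm']
        have h2 : ((m' : A ⧸ I ^ 2) + 1) * (π a) ^ m' * (-(π d))
            = -π ((n : A) * a ^ (n - 1) * d) := by
          subst hm'
          simp only [map_mul, map_pow, map_natCast, Nat.add_sub_cancel]
          push_cast
          ring
        rw [h1, h2, hda, hane]
        rw [← map_neg, ← map_add]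
        congr 1
        ring
      rw [map_sub, this, map_one, sub_self]
    -- apply IH with I ^ 2
    have hI2m : I ^ 2 ≤ IsLocalRing.maximalIdeal A :=
      le_trans (Ideal.pow_le_self (by norm_num)) hIm
    have hI20 : (I ^ 2) ^ (2 ^ m) = ⊥ := by
      rw [← pow_mul]
      rw [show 2 * 2 ^ m = 2 ^ (m + 1) by rw [pow_succ]; ring]
      exact hI0
    obtain ⟨b, hb1, hb2⟩ := ih (I ^ 2) hI2m hI20 c hkey
    refine ⟨b, hb1, ?_⟩
    have : b - a = (b - c) + (-d) := by rw [hc]; ring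
    rw [this]
    exact Ideal.add_mem _ ((Ideal.pow_le_self (by norm_num)) hb2) (neg_mem hdI)

/-- Let `A` be a commutative Artinian local ring, `I` an ideal contained in the maximal
ideal, and `n` a positive integer invertible in `A`. Then the quotient map `A → A ⧸ I`
induces an isomorphism `μ_n(A) → μ_n(A ⧸ I)` on groups of `n`-th roots of unity. -/
theorem rootsOfUnity_quotient_bijective
    {A : Type*} [CommRing A] [IsArtinianRing A] [IsLocalRing A]
    (I : Ideal A) (hI : I ≤ IsLocalRing.maximalIdeal A)
    (n : ℕ) (hn : 0 < n) (hunit : IsUnit (n : A)) :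
    Function.Bijective (restrictRootsOfUnity (Ideal.Quotient.mk I) n) := by
  -- maximal ideal is nilpotent
  obtain ⟨k, hk⟩ : IsNilpotent (IsLocalRing.maximalIdeal A) := by
    rw [← IsLocalRing.jacobson_eq_maximalIdeal (⊥ : Ideal A) bot_ne_top]
    exact IsArtinianRing.isNilpotent_jacobson_bot
  have hIk : I ^ k = ⊥ := by
    have h1 : I ^ k ≤ IsLocalRing.maximalIdeal A ^ k := Ideal.pow_right_mono hI k
    rw [hk] at h1
    exact eq_bot_iff.mpr (by simpa using h1)
  constructor
  · -- injectivity
    rw [injective_iff_map_eq_one]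
    intro ζ hζ
    have hv : Ideal.Quotient.mk I ((ζ : Aˣ) : A) = 1 := by
      have h1 := congrArg (fun t : rootsOfUnity n (A ⧸ I) => ((t : (A ⧸ I)ˣ) : A ⧸ I)) hζ
      simpa using h1
    have hxI : ((ζ : Aˣ) : A) - 1 ∈ I := by
      rw [← Ideal.Quotient.eq_zero_iff_mem, map_sub, hv, map_one, sub_self]
    set x := ((ζ : Aˣ) : A) - 1 with hx
    have hxnil : IsNilpotent x := by
      refine ⟨k, ?_⟩
      have : x ^ k ∈ I ^ k := Ideal.pow_mem_pow hxI k
      rw [hIk] at this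
      exact Ideal.mem_bot.mp this
    have hζn : ((ζ : Aˣ) : A) ^ n = 1 := by
      have h := (mem_rootsOfUnity n (ζ : Aˣ)).mp ζ.2
      have h2 := congrArg Units.val h
      simpa using h2
    have hone : (1 + x) ^ n = 1 := by
      rw [hx]
      simpa using hζn
    have hx0 := aux_unipotent n hunit x hxnil hone
    have : ((ζ : Aˣ) : A) = 1 := by
      have := hx0
      rw [hx, sub_eq_zero] at this
      exact this
    ext
    exact this
  · -- surjectivity
    intro ζ
    obtain ⟨a, ha⟩ := Ideal.Quotient.mk_surjective (((ζ : (A ⧸ I)ˣ) : A ⧸ I))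
    have hζn : (((ζ : (A ⧸ I)ˣ) : A ⧸ I)) ^ n = 1 := by
      have h := (mem_rootsOfUnity n (ζ : (A ⧸ I)ˣ)).mp ζ.2
      have h2 := congrArg Units.val h
      simpa using h2
    have haI : a ^ n - 1 ∈ I := by
      rw [← Ideal.Quotient.eq_zero_iff_mem, map_sub, map_pow, map_one, ha, hζn, sub_self]
    obtain ⟨m, hm⟩ : ∃ m, I ^ (2 ^ m) = ⊥ := by
      refine ⟨k, ?_⟩
      rw [eq_bot_iff, ← hIk]
      exact Ideal.pow_le_pow_right (Nat.le_of_lt (Nat.lt_two_pow_self (n := k)))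
    obtain ⟨b, hb1, hb2⟩ := aux_lift n hn hunit m I hI hm a haI
    have hbU : IsUnit b := by
      refine IsUnit.of_mul_eq_one (b ^ (n - 1)) ?_
      rw [← pow_succ', Nat.sub_add_cancel hn]
      exact hb1
    refine ⟨⟨hbU.unit, ?_⟩, ?_⟩
    · rw [mem_rootsOfUnity]
      ext
      push_cast
      rw [IsUnit.unit_spec]
      exact hb1
    · ext
      simp only [restrictRootsOfUnity_coe_apply]
      show Ideal.Quotient.mk I ((hbU.unit : Aˣ) : A) = _
      rw [IsUnit.unit_spec]
      have : Ideal.Quotient.mk I b = Ideal.Quotient.mk I a := by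
        rw [← sub_eq_zero, ← map_sub, Ideal.Quotient.eq_zero_iff_mem]
        exact hb2
      rw [this, ha]
end

section
/- Let A be a commutative Noetherian local ring that is adically complete with respect to its maximal ideal, let κ be its residue field, and let n be a positive integer that is invertible in A. Then the residue map A → κ induces an isomorphism of groups μ_n(A) → μ_n(κ), where μ_n(R) denotes the group of n-th roots of unity of a commutative ring R. -/
open IsLocalRing Polynomial

/-- Let `A` be a commutative Noetherian local ring which is adically complete with respect
to its maximal ideal, with residue field `κ`, and let `n` be a positive integer invertible
in `A`. Then the residue map `A → κ` induces an isomorphism `μ_n(A) → μ_n(κ)`. -/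
theorem rootsOfUnity_residue_bijective
    {A : Type*} [CommRing A] [IsNoetherianRing A] [IsLocalRing A]
    [IsAdicComplete (IsLocalRing.maximalIdeal A) A]
    (n : ℕ) (hn : 0 < n) (hunit : IsUnit (n : A)) :
    Function.Bijective (restrictRootsOfUnity (IsLocalRing.residue A) n) := by
  constructor
  · -- injectivity
    intro ζ₁ ζ₂ h
    -- it suffices to show η := ζ₁ * ζ₂⁻¹ is 1
    have key : ∀ η ∈ rootsOfUnity n A, residue A (η : Aˣ) = 1 → (η : Aˣ) = 1 := by
      intro η hη hres
      have hηn : ((η : Aˣ) : A) ^ n = 1 := by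
        have h2 := (mem_rootsOfUnity n η).mp hη
        have := congrArg (Units.val) h2
        push_cast at this
        exact this
      set t : A := ((η : Aˣ) : A) - 1 with ht
      have htm : t ∈ maximalIdeal A := by
        have : residue A t = 0 := by
          simp [ht, map_sub, hres]
        exact ((IsLocalRing.residue_eq_zero_iff t)).mp this
      have hgeom : (∑ i ∈ Finset.range n, ((η : Aˣ) : A) ^ i * 1 ^ (n - 1 - i)) *
          (((η : Aˣ) : A) - 1) = ((η : Aˣ) : A) ^ n - 1 ^ n := geom_sum₂_mul _ _ n
      have hS : IsUnit (∑ i ∈ Finset.range n, ((η : Aˣ) : A) ^ i * 1 ^ (n - 1 - i)) := by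
        rw [← IsLocalRing.notMem_maximalIdeal]
        intro hmem
        have : residue A (∑ i ∈ Finset.range n, ((η : Aˣ) : A) ^ i * 1 ^ (n - 1 - i)) = 0 :=
          (IsLocalRing.residue_eq_zero_iff _).mpr hmem
        rw [map_sum] at this
        simp only [map_mul, map_pow, hres, one_pow, mul_one] at this
        rw [Finset.sum_const, Finset.card_range, nsmul_eq_mul, mul_one] at this
        have hnk : IsUnit ((n : ResidueField A)) := by
          have := hunit.map (residue A)
          simpa using this
        rw [this] at hnk
        exact not_isUnit_zero hnk
      have : ((η : Aˣ) : A) - 1 = 0 := by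
        have h0 : (∑ i ∈ Finset.range n, ((η : Aˣ) : A) ^ i * 1 ^ (n - 1 - i)) *
            (((η : Aˣ) : A) - 1) = 0 := by rw [hgeom, hηn, one_pow, sub_self]
        exact (hS.mul_right_eq_zero).mp h0
      ext
      exact sub_eq_zero.mp this
    have hres : residue A ((ζ₁ : Aˣ) * (ζ₂ : Aˣ)⁻¹ : Aˣ) = 1 := by
      have h1 : ((restrictRootsOfUnity (residue A) n ζ₁ : (ResidueField A)ˣ) : ResidueField A)
          = ((restrictRootsOfUnity (residue A) n ζ₂ : (ResidueField A)ˣ) : ResidueField A) := by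
        rw [h]
      rw [restrictRootsOfUnity_coe_apply, restrictRootsOfUnity_coe_apply] at h1
      have h2 : residue A ((ζ₂ : Aˣ)⁻¹ : Aˣ) * residue A ((ζ₂ : Aˣ) : A) = 1 := by
        rw [← map_mul]
        norm_cast
        simp
      calc residue A ((ζ₁ : Aˣ) * (ζ₂ : Aˣ)⁻¹ : Aˣ)
          = residue A ((ζ₁ : Aˣ) : A) * residue A ((ζ₂ : Aˣ)⁻¹ : Aˣ) := by
            push_cast; rw [map_mul]
        _ = 1 := by rw [h1, mul_comm, h2]
    have := key (ζ₁ * ζ₂⁻¹) (mul_mem ζ₁.2 (inv_mem ζ₂.2)) (by exact_mod_cast hres)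
    have : (ζ₁ : Aˣ) * (ζ₂ : Aˣ)⁻¹ = 1 := by exact_mod_cast this
    have : (ζ₁ : Aˣ) = (ζ₂ : Aˣ) := by
      exact mul_inv_eq_one.mp this
    exact Subtype.ext this
  · -- surjectivity
    intro ζ
    obtain ⟨b, hb⟩ := Ideal.Quotient.mk_surjective (((ζ : (ResidueField A)ˣ) : ResidueField A))
    have hbres : residue A b = ((ζ : (ResidueField A)ˣ) : ResidueField A) := hb
    have hζn : ((ζ : (ResidueField A)ˣ) : ResidueField A) ^ n = 1 := by
      have h2 := (mem_rootsOfUnity n (ζ : (ResidueField A)ˣ)).mp ζ.2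
      have := congrArg Units.val h2
      push_cast at this
      exact this
    set f : A[X] := X ^ n - C 1 with hf
    have hmonic : f.Monic := monic_X_pow_sub_C 1 hn.ne'
    have heval : f.eval b ∈ maximalIdeal A := by
      rw [← IsLocalRing.residue_eq_zero_iff]
      simp only [hf, eval_sub, eval_pow, eval_X, eval_C, eval_one, map_sub, map_pow, map_one, hbres, hζn,
        sub_self]
    have hderiv : IsUnit (Ideal.Quotient.mk (maximalIdeal A) (f.derivative.eval b)) := by
      have : f.derivative = (n : A[X]) * X ^ (n - 1) := by
        simp [hf, derivative_X_pow]
      rw [this]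
      simp only [eval_mul, eval_pow, eval_X, eval_natCast, map_mul, map_pow]
      apply IsUnit.mul
      · simpa using hunit.map (Ideal.Quotient.mk (maximalIdeal A))
      · apply IsUnit.pow
        show IsUnit (residue A b)
        rw [hbres]
        exact Units.isUnit _
    obtain ⟨a, ha, ham⟩ := HenselianRing.is_henselian (I := maximalIdeal A) f hmonic b heval hderiv
    have han : a ^ n = 1 := by
      have := ha
      simp only [hf, IsRoot, eval_sub, eval_pow, eval_X, eval_C, sub_eq_zero] at this
      exact this
    have haunit : IsUnit a := IsUnit.of_pow_eq_one han hn.ne'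
    refine ⟨⟨haunit.unit, ?_⟩, ?_⟩
    · rw [mem_rootsOfUnity]
      ext
      push_cast
      exact han
    · apply Subtype.ext
      apply Units.ext
      rw [restrictRootsOfUnity_coe_apply]
      show residue A a = _
      have : residue A (a - b) = 0 := (IsLocalRing.residue_eq_zero_iff _).mpr ham
      rw [map_sub, sub_eq_zero] at this
      rw [this, hbres]
end

section
/- Let A be a commutative Noetherian local ring that is adically complete with respect to its maximal ideal, let κ be its residue field, and let n be a positive integer that is invertible in A. Let G be a finite group, and regard the groups μ_n(A) and μ_n(κ) of n-th roots of unity as abelian groups with trivial G-action. Then for every d ≥ 1, the map H^d(G, μ_n(A)) → H^d(G, μ_n(κ)) on group cohomology induced by the residue map A → κ is an isomorphism. -/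
open CategoryTheory

universe u

/-- The morphism of trivial `G`-representations induced by a linear map between
the coefficient modules. -/
def Rep.trivialHom {k G : Type u} [CommRing k] [Group G] {V W : Type u}
    [AddCommGroup V] [Module k V] [AddCommGroup W] [Module k W] (f : V →ₗ[k] W) :
    Rep.trivial k G V ⟶ Rep.trivial k G W :=
  Rep.ofHom ⟨f, fun _ => rfl⟩

/-- The map on group cohomology induced by a morphism of representations, defined via
the identification `groupCohomologyIsoExt` of group cohomology with `Ext` groups, which
are functorial in the second variable. -/
noncomputable def groupCohomologyMap {k G : Type u} [CommRing k] [Group G]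
    {A B : Rep k G} (f : A ⟶ B) (n : ℕ) :
    groupCohomology A n ⟶ groupCohomology B n :=
  (groupCohomologyIsoExt A n).hom ≫
    ((Ext k (Rep k G) n).obj (Opposite.op <| Rep.trivial k G k)).map f ≫
    (groupCohomologyIsoExt B n).inv

open IsLocalRing Polynomial

theorem aux_bij {A : Type} [CommRing A] [IsLocalRing A]
    [IsAdicComplete (IsLocalRing.maximalIdeal A) A]
    (n : ℕ) (hn : 0 < n) (hunit : IsUnit (n : A)) :
    Function.Bijective (restrictRootsOfUnity (IsLocalRing.residue A) n) := by
  constructor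
  · rw [injective_iff_map_eq_one]
    intro ζ hζ
    have hres : residue A ((ζ : Aˣ) : A) = 1 := by
      have := congrArg (fun u : (ResidueField A)ˣ => (u : ResidueField A)) (congrArg Subtype.val hζ)
      simpa using this
    have hx : ((ζ : Aˣ) : A) ^ n = 1 := (mem_rootsOfUnity' n _).mp ζ.2
    set x : A := ((ζ : Aˣ) : A) with hxdef
    have hsum : IsUnit (∑ i ∈ Finset.range n, x ^ i) := by
      rw [← IsLocalRing.notMem_maximalIdeal]
      intro hmem
      have h0 : residue A (∑ i ∈ Finset.range n, x ^ i) = 0 :=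
        (Ideal.Quotient.eq_zero_iff_mem).2 hmem
      rw [map_sum] at h0
      simp only [map_pow, hres, one_pow] at h0
      rw [Finset.sum_const, Finset.card_range, nsmul_eq_mul, mul_one] at h0
      have : IsUnit ((n : ResidueField A)) := by
        have := hunit.map (residue A)
        rwa [map_natCast] at this
      rw [h0] at this
      exact not_isUnit_zero this
    have : (∑ i ∈ Finset.range n, x ^ i) * (x - 1) = 0 := by
      rw [geom_sum_mul, hx, sub_self]
    have hx1 : x = 1 := sub_eq_zero.mp (hsum.mul_right_eq_zero.mp this)
    ext
    exact hx1
  · intro ξ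
    set b₀ : ResidueField A := ((ξ : (ResidueField A)ˣ) : ResidueField A) with hb
    obtain ⟨a₀, ha₀⟩ := Ideal.Quotient.mk_surjective (I := maximalIdeal A) b₀
    have hb₀n : b₀ ^ n = 1 := (mem_rootsOfUnity' n _).mp ξ.2
    have hres : residue A a₀ = b₀ := ha₀
    set f : A[X] := X ^ n - C 1 with hf
    have hmonic : f.Monic := monic_X_pow_sub_C 1 (by omega)
    have heval : f.eval a₀ ∈ maximalIdeal A := by
      rw [← Ideal.Quotient.eq_zero_iff_mem]
      show residue A (f.eval a₀) = 0
      simp only [hf, eval_sub, eval_pow, eval_X, eval_C, eval_one, map_sub, map_pow, map_one]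
      rw [hres, hb₀n, sub_self]
    have hderiv : IsUnit (Ideal.Quotient.mk (maximalIdeal A) (f.derivative.eval a₀)) := by
      have : f.derivative = C (n : A) * X ^ (n - 1) := by
        simp [hf, derivative_X_pow]
      rw [this]
      simp only [eval_mul, eval_C, eval_pow, eval_X, map_mul, map_pow]
      refine (hunit.map _).mul ?_
      show IsUnit ((residue A a₀) ^ (n-1))
      rw [hres]
      exact (ξ : (ResidueField A)ˣ).isUnit.pow _
    obtain ⟨a, hroot, hmod⟩ := HenselianRing.is_henselian (I := maximalIdeal A) f hmonic a₀ heval hderiv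
    have han : a ^ n = 1 := by
      have : f.eval a = 0 := hroot
      simp only [hf, eval_sub, eval_pow, eval_X, eval_C] at this
      exact sub_eq_zero.mp this
    have haunit : IsUnit a := IsUnit.of_mul_eq_one (a ^ (n - 1)) (by
      rw [← pow_succ', Nat.sub_add_cancel hn]; exact han)
    obtain ⟨u, hu⟩ := haunit
    refine ⟨⟨u, ?_⟩, ?_⟩
    · rw [mem_rootsOfUnity]
      ext
      simpa [hu] using han
    · ext
      show residue A ((u : A)) = b₀
      rw [hu]
      have : residue A (a - a₀) = 0 := (Ideal.Quotient.eq_zero_iff_mem).2 hmod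
      rw [map_sub, sub_eq_zero] at this
      rw [this, hres]

theorem isIso_trivialHom {k G : Type u} [CommRing k] [Group G] {V W : Type u}
    [AddCommGroup V] [Module k V] [AddCommGroup W] [Module k W] (f : V →ₗ[k] W)
    (hf : Function.Bijective f) : IsIso (Rep.trivialHom (G := G) f) := by
  let e := LinearEquiv.ofBijective f hf
  refine ⟨Rep.trivialHom e.symm.toLinearMap, ?_, ?_⟩
  · apply Rep.hom_ext
    ext x
    exact e.symm_apply_apply x
  · apply Rep.hom_ext
    ext x
    exact e.apply_symm_apply x

/-- Let `A` be a commutative Noetherian local ring, adically complete with respect to its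
maximal ideal, with residue field `κ`, and let `n` be a positive integer invertible in `A`.
Let `G` be a finite group acting trivially on `μ_n(A)` and `μ_n(κ)`. Then for every `d ≥ 1`,
the map `H^d(G, μ_n(A)) → H^d(G, μ_n(κ))` induced by the residue map `A → κ` is an
isomorphism. -/
theorem bijective_groupCohomologyMap_rootsOfUnity_residue
    {A : Type} [CommRing A] [IsNoetherianRing A] [IsLocalRing A]
    [IsAdicComplete (IsLocalRing.maximalIdeal A) A]
    (n : ℕ) (hn : 0 < n) (hunit : IsUnit (n : A))
    {G : Type} [Group G] [Finite G] (d : ℕ) (hd : 1 ≤ d) :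
    Function.Bijective (groupCohomologyMap (G := G) (Rep.trivialHom
      ((MonoidHom.toAdditive
        (restrictRootsOfUnity (IsLocalRing.residue A) n)).toIntLinearMap)) d) := by
  have hbij : Function.Bijective
      ((MonoidHom.toAdditive (restrictRootsOfUnity (IsLocalRing.residue A) n)).toIntLinearMap) :=
    aux_bij n hn hunit
  have h1 : IsIso (Rep.trivialHom (G := G)
      ((MonoidHom.toAdditive
        (restrictRootsOfUnity (IsLocalRing.residue A) n)).toIntLinearMap)) :=
    isIso_trivialHom _ hbij
  haveI h2 : IsIso (groupCohomologyMap (G := G) (Rep.trivialHom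
      ((MonoidHom.toAdditive
        (restrictRootsOfUnity (IsLocalRing.residue A) n)).toIntLinearMap)) d) := by
    unfold groupCohomologyMap
    infer_instance
  exact ConcreteCategory.bijective_of_isIso (groupCohomologyMap (G := G) (Rep.trivialHom
      ((MonoidHom.toAdditive
        (restrictRootsOfUnity (IsLocalRing.residue A) n)).toIntLinearMap)) d)
end
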